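/- In the ladder graph L_n = P_n □ K_2 (n ≥ 2), the difference R_{L_{n+1}}[(a_1,c_1),(a_{n+1},c_2)] − R_{L_n}[(a_1,c_1),(a_n,c_2)] is strictly greater than 1/4. -/

import Mathlib

open Matrix Finset

open Classical in
/-- The Moore–Penrose pseudoinverse of a real square matrix, defined via the
four Penrose conditions (it is unique when it exists). -/
noncomputable def Matrix.mpinv {m : Type*} [Fintype m] [DecidableEq m]
    (A : Matrix m m ℝ) : Matrix m m ℝ :=
  if h : ∃ B : Matrix m m ℝ,
      A * B * A = A ∧ B * A * B = B ∧ (A * B)ᵀ = A * B ∧ (B * A)ᵀ = B * A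
  then h.choose else 0

/-- Effective resistance between `u` and `v` with respect to a (weighted)
Laplacian matrix `L`:  `(e_u - e_v)ᵀ L⁺ (e_u - e_v)`. -/
noncomputable def effRes {m : Type*} [Fintype m] [DecidableEq m]
    (L : Matrix m m ℝ) (u v : m) : ℝ :=
  (Pi.single u 1 - Pi.single v 1) ⬝ᵥ (L.mpinv *ᵥ (Pi.single u 1 - Pi.single v 1))

/-- The (real) Laplacian matrix of a simple graph. -/
noncomputable def lapm {V : Type*} [Fintype V] [DecidableEq V]
    (G : SimpleGraph V) : Matrix V V ℝ :=
  letI := Classical.decRel G.Adj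
  G.lapMatrix ℝ

/-- Resistance distance between two vertices of a simple graph. -/
noncomputable def resDist {V : Type*} [Fintype V] [DecidableEq V]
    (G : SimpleGraph V) (u v : V) : ℝ :=
  effRes (lapm G) u v

/-- Resistance diameter of a simple graph. -/
noncomputable def resDiam {V : Type*} [Fintype V] [DecidableEq V]
    (G : SimpleGraph V) : ℝ :=
  ⨆ p : V × V, resDist G p.1 p.2

/-- The weighted Laplacian of the cone over `G` with apex `Sum.inr ()`:
edges of `G` have conductance `1` (unit resistance), and each vertex of `G`
is joined to the apex by an edge of conductance `m` (resistance `1/m`). -/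
noncomputable def coneLap {V : Type*} [Fintype V] [DecidableEq V]
    (G : SimpleGraph V) (m : ℝ) : Matrix (V ⊕ Unit) (V ⊕ Unit) ℝ :=
  letI := Classical.decRel G.Adj
  let W : Matrix (V ⊕ Unit) (V ⊕ Unit) ℝ := fun i j =>
    match i, j with
    | Sum.inl a, Sum.inl b => if G.Adj a b then 1 else 0
    | Sum.inl _, Sum.inr _ => m
    | Sum.inr _, Sum.inl _ => m
    | Sum.inr _, Sum.inr _ => 0
  Matrix.of fun i j => (if i = j then ∑ k, W i k else 0) - W i j

/-- The `k`-dimensional hypercube graph `Q_k`. -/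
def hypercube (k : ℕ) : SimpleGraph (Fin k → Bool) where
  Adj x y := (Finset.univ.filter fun i => x i ≠ y i).card = 1
  symm := by
    constructor
    intro x y h
    rw [← h]
    congr 1
    ext i
    simp [ne_comm]
  loopless := by constructor; intro x; simp

/-- The join `G + H` of two graphs on disjoint vertex sets. -/
def graphJoin {V W : Type*} (G : SimpleGraph V) (H : SimpleGraph W) :
    SimpleGraph (V ⊕ W) where
  Adj x y :=
    match x, y with
    | Sum.inl a, Sum.inl b => G.Adj a b
    | Sum.inr a, Sum.inr b => H.Adj a b
    | Sum.inl _, Sum.inr _ => True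
    | Sum.inr _, Sum.inl _ => True
  symm := by
    constructor
    rintro (a | a) (b | b) h
    · exact h.symm
    · trivial
    · trivial
    · exact h.symm
  loopless := by
    constructor
    rintro (a | a) h
    · exact G.loopless.irrefl a h
    · exact H.loopless.irrefl a h

section LadderAux

lemma exists_mpinv_of_isHermitian {m : Type*} [Fintype m] [DecidableEq m]
    (A : Matrix m m ℝ) (hA : A.IsHermitian) :
    ∃ B : Matrix m m ℝ,
      A * B * A = A ∧ B * A * B = B ∧ (A * B)ᵀ = A * B ∧ (B * A)ᵀ = B * A := by
  classical
  set U : Matrix m m ℝ := (hA.eigenvectorUnitary : Matrix m m ℝ) with hUdef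
  have hU1 : star U * U = 1 := by
    exact_mod_cast Unitary.coe_star_mul_self hA.eigenvectorUnitary
  set d : m → ℝ := hA.eigenvalues with hd
  have hAeq : A = U * Matrix.diagonal d * star U := by
    have := hA.spectral_theorem; simpa using this
  set d' : m → ℝ := fun i => if d i = 0 then 0 else (d i)⁻¹ with hd'
  have key : ∀ e f : m → ℝ,
      (U * Matrix.diagonal e * star U) * (U * Matrix.diagonal f * star U)
        = U * Matrix.diagonal (e * f) * star U := by
    intro e f
    have h1 : (U * Matrix.diagonal e * star U) * (U * Matrix.diagonal f * star U)
        = U * (Matrix.diagonal e * (star U * U) * Matrix.diagonal f) * star U := by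
      simp only [mul_assoc]
    rw [h1, hU1, mul_one, Matrix.diagonal_mul_diagonal]; rfl
  have symm : ∀ e : m → ℝ,
      (U * Matrix.diagonal e * star U)ᵀ = U * Matrix.diagonal e * star U := by
    intro e
    have : (U * Matrix.diagonal e * star U).IsHermitian := by
      apply Matrix.isHermitian_mul_mul_conjTranspose
      exact Matrix.isHermitian_diagonal _
    rw [← Matrix.conjTranspose_eq_transpose_of_trivial]; exact this
  have hdd : d * d' * d = d := by
    funext i
    by_cases h : d i = 0 <;> simp [hd', h] <;> field_simp
  have hd'd : d' * d * d' = d' := by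
    funext i
    by_cases h : d i = 0 <;> simp [hd', h] <;> field_simp
  refine ⟨U * Matrix.diagonal d' * star U, ?_, ?_, ?_, ?_⟩
  · rw [hAeq, key, key, hdd]
  · rw [hAeq, key, key, hd'd]
  · rw [hAeq, key]; exact symm _
  · rw [hAeq, key]; exact symm _

lemma effRes_eq_of_solution {m : Type*} [Fintype m] [DecidableEq m]
    (L : Matrix m m ℝ) (hL : L.IsSymm) (x : m → ℝ) (u v : m)
    (hx : L *ᵥ x = Pi.single u 1 - Pi.single v 1) :
    effRes L u v = x u - x v := by
  classical
  have hherm : L.IsHermitian := by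
    rwa [Matrix.IsHermitian, Matrix.conjTranspose_eq_transpose_of_trivial]
  have hex := exists_mpinv_of_isHermitian L hherm
  have hB : L.mpinv = hex.choose := by
    rw [Matrix.mpinv, dif_pos hex]
  obtain ⟨h1, h2, h3, h4⟩ := hex.choose_spec
  set B := hex.choose with hBdef
  set b : m → ℝ := Pi.single u 1 - Pi.single v 1 with hb
  have hLBL : L *ᵥ (B *ᵥ b) = b := by
    rw [← hx, Matrix.mulVec_mulVec, Matrix.mulVec_mulVec, h1]
  have he : effRes L u v = b ⬝ᵥ (B *ᵥ b) := by rw [effRes, hB]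
  calc effRes L u v = (L *ᵥ x) ⬝ᵥ (B *ᵥ b) := by rw [he, hx]
    _ = ((B *ᵥ b) ᵥ* L) ⬝ᵥ x := by
        rw [dotProduct_comm, Matrix.dotProduct_mulVec]
    _ = (L *ᵥ (B *ᵥ b)) ⬝ᵥ x := by
        rw [← Matrix.mulVec_transpose, hL.eq]
    _ = b ⬝ᵥ x := by rw [hLBL]
    _ = x u - x v := by
        rw [hb]
        simp [dotProduct_comm, sub_dotProduct]

noncomputable def ral : ℝ := 2 - Real.sqrt 3
noncomputable def lDD (m : ℕ) : ℝ := (3 - ral) + (3 * ral - 1) * ral ^ (m - 2)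
noncomputable def lpp (m k : ℕ) : ℝ :=
  ((lDD m)⁻¹ * (ral ^ k + ral ^ (m - 1 - k)) + (((m : ℝ) - 1) / 2 - (k : ℝ))) / 2
noncomputable def lxx (m : ℕ) : Fin m × Fin 2 → ℝ :=
  fun z => if z.2.1 = 0 then lpp m z.1.1 else - lpp m (m - 1 - z.1.1)

lemma sqrt3_sq : Real.sqrt 3 ^ 2 = 3 := Real.sq_sqrt (by norm_num)
lemma sqrt3_gt : 5/3 < Real.sqrt 3 := by
  nlinarith [sqrt3_sq, Real.sqrt_nonneg 3]
lemma sqrt3_lt : Real.sqrt 3 < 7/4 := by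
  nlinarith [sqrt3_sq, Real.sqrt_nonneg 3]
lemma ral_pos : 0 < ral := by unfold ral; nlinarith [sqrt3_lt]
lemma ral_lt_one : ral < 1 := by unfold ral; nlinarith [sqrt3_gt]
lemma hal2 : ral ^ 2 = 4 * ral - 1 := by
  unfold ral; nlinarith [sqrt3_sq]
lemma lDD_pos (m : ℕ) : 0 < lDD m := by
  unfold lDD
  have h1 : ral ^ (m - 2) ≤ 1 := pow_le_one₀ ral_pos.le ral_lt_one.le
  have h2 : 0 < ral ^ (m - 2) := pow_pos ral_pos _
  have h3 : 3 * ral - 1 < 0 := by unfold ral; nlinarith [sqrt3_gt]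
  nlinarith [ral_pos]

lemma lkey (m k : ℕ) (hm : 2 ≤ m) (hk : k < m) :
    (1 + (if 0 < k then (1:ℝ) else 0) + (if k + 1 < m then (1:ℝ) else 0)) * lpp m k
      - (if k + 1 < m then (1:ℝ) else 0) * lpp m (k + 1)
      - (if 0 < k then (1:ℝ) else 0) * lpp m (k - 1)
      + lpp m (m - 1 - k) = if k = 0 then 1 else 0 := by
  have hne : ∀ r : ℕ, (3 - ral) + (3 * ral - 1) * ral ^ r ≠ 0 := by
    intro r
    have := lDD_pos (r + 2)
    unfold lDD at this
    simpa using this.ne'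
  by_cases hk0 : k = 0
  · subst hk0
    obtain ⟨r, rfl⟩ : ∃ r, m = r + 2 := ⟨m - 2, by omega⟩
    have e1 : r + 2 - 1 - 0 = r + 1 := by omega
    have e2 : r + 2 - 1 - 1 = r := by omega
    have e3 : r + 2 - 1 - (r + 1) = 0 := by omega
    have e4 : r + 2 - 2 = r := by omega
    rw [if_neg (by omega), if_pos (by omega), if_pos rfl]
    unfold lpp lDD
    rw [e1, e2, e3, e4]
    push_cast
    field_simp [hne r]
    ring
  · by_cases hk1 : k = m - 1
    · obtain ⟨r, rfl⟩ : ∃ r, m = r + 2 := ⟨m - 2, by omega⟩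
      have hkr : k = r + 1 := by omega
      subst hkr
      have e1 : r + 2 - 1 - (r + 1) = 0 := by omega
      have e2 : r + 2 - 1 - r = 1 := by omega
      have e3 : r + 2 - 1 - 0 = r + 1 := by omega
      have e4 : r + 2 - 2 = r := by omega
      have e5 : r + 1 - 1 = r := by omega
      rw [if_pos (by omega), if_neg (by omega), if_neg (by omega)]
      unfold lpp lDD
      have e6 : r + 2 - 1 - (r + 1 + 1) = 0 := by omega
      rw [e1, e5, e2, e3, e4, e6]
      push_cast
      field_simp [hne r]
      ring
    · obtain ⟨a, rfl⟩ : ∃ a, k = a + 1 := ⟨k - 1, by omega⟩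
      obtain ⟨b, rfl⟩ : ∃ b, m = a + b + 3 := ⟨m - a - 3, by omega⟩
      have e1 : a + b + 3 - 1 - (a + 1) = b + 1 := by omega
      have e2 : a + b + 3 - 1 - (a + 1 + 1) = b := by omega
      have e3 : a + 1 - 1 = a := by omega
      have e4 : a + b + 3 - 1 - a = b + 2 := by omega
      have e5 : a + b + 3 - 1 - (b + 1) = a + 1 := by omega
      rw [if_pos (by omega), if_pos (by omega), if_neg (by omega)]
      unfold lpp
      rw [e1, e2, e3, e4, e5]
      push_cast
      set A := (lDD (a + b + 3))⁻¹ with hA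
      linear_combination (-(A * (ral ^ a + ral ^ b)) / 2) * hal2

lemma pathSum (m : ℕ) [inst : DecidableRel (SimpleGraph.pathGraph m).Adj]
    (k : Fin m) (g : Fin m → ℝ) :
    (∑ l : Fin m, if (SimpleGraph.pathGraph m).Adj k l then g l else 0)
    = (if h : k.1 + 1 < m then g ⟨k.1 + 1, h⟩ else 0)
      + (if h : 0 < k.1 then g ⟨k.1 - 1, by omega⟩ else 0) := by
  classical
  have split : ∀ l : Fin m,
      (if (SimpleGraph.pathGraph m).Adj k l then g l else 0)
      = (if k.1 + 1 = l.1 then g l else 0) + (if l.1 + 1 = k.1 then g l else 0) := by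
    intro l
    simp only [SimpleGraph.pathGraph_adj]
    by_cases h1 : k.1 + 1 = l.1 <;> by_cases h2 : l.1 + 1 = k.1 <;>
      simp [h1, h2] <;> omega
  simp only [split]
  rw [Finset.sum_add_distrib]
  congr 1
  · by_cases h : k.1 + 1 < m
    · rw [dif_pos h]
      have h2 : (∑ l : Fin m, if k.1 + 1 = l.1 then g l else 0)
          = ∑ l : Fin m, if l = (⟨k.1 + 1, h⟩ : Fin m) then g l else 0 :=
        Finset.sum_congr rfl fun l _ =>
          if_congr (by simp only [Fin.ext_iff, Fin.val_mk]; omega) rfl rfl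
      rw [h2, Finset.sum_ite_eq']
      simp
    · rw [dif_neg h]
      apply Finset.sum_eq_zero; intro l _
      rw [if_neg]; have := l.isLt; omega
  · by_cases h : 0 < k.1
    · rw [dif_pos h]
      have h2 : (∑ l : Fin m, if l.1 + 1 = k.1 then g l else 0)
          = ∑ l : Fin m, if l = (⟨k.1 - 1, by omega⟩ : Fin m) then g l else 0 :=
        Finset.sum_congr rfl fun l _ =>
          if_congr (by simp only [Fin.ext_iff, Fin.val_mk]; omega) rfl rfl
      rw [h2, Finset.sum_ite_eq']
      simp
    · rw [dif_neg h]
      apply Finset.sum_eq_zero; intro l _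
      rw [if_neg]; omega

lemma adjSum (m : ℕ)
    [inst : DecidableRel ((SimpleGraph.pathGraph m).boxProd (SimpleGraph.pathGraph 2)).Adj]
    (k : Fin m) (c : Fin 2) (f : Fin m × Fin 2 → ℝ) :
    (∑ j : Fin m × Fin 2,
      if ((SimpleGraph.pathGraph m).boxProd (SimpleGraph.pathGraph 2)).Adj (k, c) j
      then f j else 0)
    = ((if h : k.1 + 1 < m then f (⟨k.1 + 1, h⟩, c) else 0)
      + (if h : 0 < k.1 then f (⟨k.1 - 1, by omega⟩, c) else 0))
      + f (k, ⟨1 - c.1, by omega⟩) := by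
  classical
  rw [Fintype.sum_prod_type]
  have inner : ∀ l : Fin m,
      (∑ d : Fin 2,
        if ((SimpleGraph.pathGraph m).boxProd (SimpleGraph.pathGraph 2)).Adj (k, c) (l, d)
        then f (l, d) else 0)
      = (if (SimpleGraph.pathGraph m).Adj k l then f (l, c) else 0)
        + (if l = k then f (l, ⟨1 - c.1, by omega⟩) else 0) := by
    intro l
    rw [Fin.sum_univ_two]
    fin_cases c <;>
    · simp only [SimpleGraph.boxProd_adj, SimpleGraph.pathGraph_adj]
      by_cases hp : (SimpleGraph.pathGraph m).Adj k l <;>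
        by_cases he : l = k <;>
          simp_all [SimpleGraph.pathGraph_adj, Fin.ext_iff, eq_comm] <;> omega
  simp only [inner]
  rw [Finset.sum_add_distrib, pathSum]
  congr 1
  rw [Finset.sum_ite_eq']
  simp

lemma lapm_mulVec {V : Type*} [Fintype V] [DecidableEq V] (G : SimpleGraph V)
    [inst : DecidableRel G.Adj] (x : V → ℝ) (v : V) :
    (lapm G *ᵥ x) v = ∑ u : V, if G.Adj v u then (x v - x u) else 0 := by
  have hL : lapm G = G.lapMatrix ℝ := by
    rw [lapm]; congr!
  rw [hL, SimpleGraph.lapMatrix_mulVec_apply]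
  rw [SimpleGraph.neighborFinset_eq_filter, Finset.sum_filter]
  have hdeg : (G.degree v : ℝ) = ∑ u : V, if G.Adj v u then (1:ℝ) else 0 := by
    rw [← SimpleGraph.card_neighborFinset_eq_degree, SimpleGraph.neighborFinset_eq_filter]
    rw [Finset.card_eq_sum_ones]
    push_cast
    rw [Finset.sum_filter]
  rw [hdeg, Finset.sum_mul, ← Finset.sum_sub_distrib]
  apply Finset.sum_congr rfl
  intro u _
  by_cases h : G.Adj v u <;> simp [h]

lemma lap_solve (m : ℕ) (hm : 2 ≤ m) :
    lapm ((SimpleGraph.pathGraph m).boxProd (SimpleGraph.pathGraph 2)) *ᵥ lxx m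
    = Pi.single ((⟨0, (by omega : 1 ≤ m)⟩ : Fin m), (0 : Fin 2)) 1
      - Pi.single ((⟨m - 1, (by omega : m - 1 + 1 ≤ m)⟩ : Fin m), (1 : Fin 2)) 1 := by
  classical
  funext z
  obtain ⟨k, c⟩ := z
  rw [lapm_mulVec, adjSum]
  have hk := k.isLt
  have hrhs : ((Pi.single ((⟨0, (by omega : 1 ≤ m)⟩ : Fin m), (0 : Fin 2)) 1
      - Pi.single ((⟨m - 1, (by omega : m - 1 + 1 ≤ m)⟩ : Fin m), (1 : Fin 2)) 1 : Fin m × Fin 2 → ℝ)) (k, c)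
      = (if k.1 = 0 ∧ c.1 = 0 then 1 else 0) - (if k.1 = m - 1 ∧ c.1 = 1 then 1 else 0) := by
    rw [Pi.sub_apply, Pi.single_apply, Pi.single_apply]
    simp only [Prod.ext_iff, Fin.ext_iff, Fin.val_zero, Fin.val_one]
  rw [hrhs]
  fin_cases c
  · -- c = 0
    have key := lkey m k.1 hm k.isLt
    simp only [lxx]
    norm_num
    by_cases h1 : 0 < (k : ℕ) <;> by_cases h2 : (k : ℕ) + 1 < m
    · rw [if_pos h1, if_pos h2] at key ⊢
      linarith
    · rw [if_pos h1, if_neg h2] at key ⊢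
      linarith
    · rw [if_neg h1, if_pos h2] at key ⊢
      linarith
    · exact absurd (show (k : ℕ) + 1 < m by omega) h2
  · -- c = 1
    have key := lkey m (m - 1 - k.1) hm (by omega)
    simp only [lxx]
    norm_num
    simp only [show (m - 1 - (k : ℕ) = 0) ↔ ((k : ℕ) = m - 1) from by omega] at key
    rw [show m - 1 - (m - 1 - (k : ℕ)) = (k : ℕ) from by omega] at key
    by_cases h1 : 0 < (k : ℕ) <;> by_cases h2 : (k : ℕ) + 1 < m
    · rw [if_pos (show 0 < m - 1 - (k : ℕ) by omega),
        if_pos (show m - 1 - (k : ℕ) + 1 < m by omega)] at key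
      rw [if_pos h1, if_pos h2,
        show m - 1 - ((k : ℕ) + 1) = m - 1 - (k : ℕ) - 1 from by omega,
        show m - 1 - ((k : ℕ) - 1) = m - 1 - (k : ℕ) + 1 from by omega]
      linarith
    · rw [if_neg (show ¬ 0 < m - 1 - (k : ℕ) by omega),
        if_pos (show m - 1 - (k : ℕ) + 1 < m by omega)] at key
      rw [if_pos h1, if_neg h2,
        show m - 1 - ((k : ℕ) - 1) = m - 1 - (k : ℕ) + 1 from by omega]
      linarith
    · rw [if_pos (show 0 < m - 1 - (k : ℕ) by omega),
        if_neg (show ¬ (m - 1 - (k : ℕ) + 1 < m) by omega)] at key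
      rw [if_neg h1, if_pos h2,
        show m - 1 - ((k : ℕ) + 1) = m - 1 - (k : ℕ) - 1 from by omega]
      linarith
    · exact absurd (show (k : ℕ) + 1 < m by omega) h2

lemma resDist_ladder (m : ℕ) (hm : 2 ≤ m) :
    resDist ((SimpleGraph.pathGraph m).boxProd (SimpleGraph.pathGraph 2))
      ((⟨0, (by omega : 1 ≤ m)⟩ : Fin m), (0 : Fin 2)) ((⟨m - 1, (by omega : m - 1 + 1 ≤ m)⟩ : Fin m), (1 : Fin 2))
    = (lDD m)⁻¹ * (1 + ral ^ (m - 1)) + ((m : ℝ) - 1) / 2 := by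
  classical
  have hsymm : (lapm ((SimpleGraph.pathGraph m).boxProd (SimpleGraph.pathGraph 2))).IsSymm := by
    unfold lapm
    exact SimpleGraph.isSymm_lapMatrix _ _
  rw [resDist, effRes_eq_of_solution _ hsymm (lxx m) _ _ (lap_solve m hm)]
  simp only [lxx]
  norm_num
  unfold lpp
  rw [show m - 1 - 0 = m - 1 from by omega]
  push_cast
  ring

lemma lF_bounds (m : ℕ) (hm : 2 ≤ m) :
    1 / (1 + Real.sqrt 3) < (lDD m)⁻¹ * (1 + ral ^ (m - 1))
      ∧ (lDD m)⁻¹ * (1 + ral ^ (m - 1)) ≤ 1 / 2 := by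
  have hD := lDD_pos m
  have hs3 : 0 ≤ Real.sqrt 3 := Real.sqrt_nonneg 3
  have h1s : (0:ℝ) < 1 + Real.sqrt 3 := by linarith
  set t : ℝ := ral ^ (m - 2) with ht
  have ht0 : 0 < t := pow_pos ral_pos _
  have ht1 : t ≤ 1 := pow_le_one₀ ral_pos.le ral_lt_one.le
  have hm1 : m - 1 = (m - 2) + 1 := by omega
  have hpow : ral ^ (m - 1) = t * ral := by rw [hm1, pow_succ]
  have hDD : lDD m = (3 - ral) + (3 * ral - 1) * t := by rw [lDD]
  constructor
  · rw [inv_mul_eq_div, div_lt_div_iff₀ h1s hD, hpow, hDD]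
    unfold ral
    nlinarith [sqrt3_sq, sqrt3_gt, mul_pos ht0 (show (0:ℝ) < 4 * Real.sqrt 3 - 6 by nlinarith [sqrt3_gt])]
  · rw [inv_mul_eq_div, div_le_div_iff₀ hD (by norm_num : (0:ℝ) < 2), hpow, hDD]
    unfold ral
    nlinarith [sqrt3_sq, mul_nonneg (show (0:ℝ) ≤ Real.sqrt 3 - 1 by nlinarith [sqrt3_gt])
      (show (0:ℝ) ≤ 1 - t by linarith)]

end LadderAux

/-- The successive differences of diagonal resistance distances in ladder graphs
exceed `1/4`. -/
theorem resDist_ladder_diff_gt (n : ℕ) (hn : 2 ≤ n) :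
    resDist ((SimpleGraph.pathGraph (n + 1)).boxProd (SimpleGraph.pathGraph 2))
        (⟨0, by omega⟩, 0) (⟨n, by omega⟩, 1)
      - resDist ((SimpleGraph.pathGraph n).boxProd (SimpleGraph.pathGraph 2))
          (⟨0, by omega⟩, 0) (⟨n - 1, by omega⟩, 1)
      > 1 / 4 := by
  have h1 := resDist_ladder (n + 1) (by omega)
  have h2 := resDist_ladder n hn
  have hb1 := lF_bounds (n + 1) (by omega)
  have hb2 := lF_bounds n hn
  simp only [Nat.add_sub_cancel] at h1 hb1
  rw [h1, h2]
  have h4 : (1:ℝ)/4 < 1/(1 + Real.sqrt 3) := by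
    rw [div_lt_div_iff₀ (by norm_num) (by nlinarith [Real.sqrt_nonneg 3])]
    nlinarith [sqrt3_lt]
  push_cast
  nlinarith [hb1.1, hb1.2, hb2.1, hb2.2, h4]
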